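/- arXiv:1111.1915 — 4 statements merged into one kernel-verified Lean document; each statement's English description precedes it below -/
import Mathlib

section
/- Let H = H₀ ⊕ H₁₁ ⊕ H₁₂ be an orthogonal decomposition of a Hilbert space, let F₁,...,Fₙ be continuous linear functionals whose representers all lie in H₀ ⊕ H₁₁, and let G : ℝⁿ → ℝ be arbitrary and λ ≥ 0. For any μ = μ₀ + μ₁₁ + μ₁₂ with components in the respective subspaces, the objective J(μ) = G(F₁(μ),...,Fₙ(μ)) + λ(‖μ₁₁‖² + ‖μ₁₂‖²) satisfies J(μ₀ + μ₁₁) ≤ J(μ). Hence any minimizer of J over H can be taken with μ₁₂ = 0. -/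
open scoped RealInnerProductSpace

/-- If `H = H₀ ⊕ H₁₁ ⊕ H₁₂` (pairwise orthogonal subspaces), the representers of the
continuous linear functionals `F j` all lie in `H₀ ⊔ H₁₁`, `λ ≥ 0`, and
`μ = μ₀ + μ₁₁ + μ₁₂` with components in the respective subspaces, then the objective
`J(μ) = G (F₁ μ, ..., Fₙ μ) + λ (‖μ₁₁‖² + ‖μ₁₂‖²)` satisfies `J(μ₀ + μ₁₁) ≤ J(μ)`;
hence any minimizer can be taken with `μ₁₂ = 0`. -/
theorem minimizer_drops_orthogonal_component
    {H : Type*} [NormedAddCommGroup H] [InnerProductSpace ℝ H] [CompleteSpace H]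
    (H₀ H₁₁ H₁₂ : Submodule ℝ H)
    (horth₀₁ : ∀ x ∈ H₀, ∀ y ∈ H₁₁, ⟪x, y⟫ = 0)
    (horth₀₂ : ∀ x ∈ H₀, ∀ y ∈ H₁₂, ⟪x, y⟫ = 0)
    (horth₁₂ : ∀ x ∈ H₁₁, ∀ y ∈ H₁₂, ⟪x, y⟫ = 0)
    (n : ℕ) (F : Fin n → H →L[ℝ] ℝ) (η : Fin n → H)
    (hrep : ∀ (j : Fin n) (f : H), ⟪η j, f⟫ = F j f)
    (hη : ∀ j : Fin n, η j ∈ H₀ ⊔ H₁₁)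
    (G : (Fin n → ℝ) → ℝ) (lam : ℝ) (hlam : 0 ≤ lam)
    (μ₀ μ₁₁ μ₁₂ : H) (h₀ : μ₀ ∈ H₀) (h₁₁ : μ₁₁ ∈ H₁₁) (h₁₂ : μ₁₂ ∈ H₁₂) :
    G (fun j => F j (μ₀ + μ₁₁)) + lam * ‖μ₁₁‖ ^ 2 ≤
      G (fun j => F j (μ₀ + μ₁₁ + μ₁₂)) + lam * (‖μ₁₁‖ ^ 2 + ‖μ₁₂‖ ^ 2) := by
  have hF : ∀ j, F j (μ₀ + μ₁₁ + μ₁₂) = F j (μ₀ + μ₁₁) := by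
    intro j
    have hzero : F j μ₁₂ = 0 := by
      obtain ⟨a, ha, b, hb, hab⟩ := Submodule.mem_sup.1 (hη j)
      rw [← hrep, ← hab, inner_add_left, horth₀₂ a ha μ₁₂ h₁₂, horth₁₂ b hb μ₁₂ h₁₂]
      ring
    rw [map_add, hzero, add_zero]
  have hG : G (fun j => F j (μ₀ + μ₁₁ + μ₁₂)) = G (fun j => F j (μ₀ + μ₁₁)) := by
    congr 1; funext j; exact hF j
  rw [hG]
  have : 0 ≤ lam * ‖μ₁₂‖ ^ 2 := mul_nonneg hlam (by positivity)
  nlinarith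
end

section
/- The bilinear form ⟨f,g⟩ = ∑_{j=0}^{m−1} f^{(j)}(a) g^{(j)}(a) + ∫_a^b (Lf)(t)(Lg)(t) dt is an inner product on H^m[a,b], where L is an m-th order linear differential operator with continuous coefficients; in particular ⟨f,f⟩ = 0 implies f ≡ 0. -/
open MeasureTheory

/-- The bilinear form `⟨f,g⟩ = ∑_{j<m} f^{(j)}(a) g^{(j)}(a) + ∫_a^b (Lf)(Lg)` is an
inner product on `H^m[a,b]`, where `(Lf)(t) = f^{(m)}(t) + ∑_{j<m} w j t * f^{(j)}(t)`
with continuous coefficients: `⟨f,f⟩ ≥ 0`, and `⟨f,f⟩ = 0` implies `f ≡ 0` on `[a,b]`. -/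
theorem differential_operator_inner_product_positive_definite
    {a b : ℝ} (hab : a < b)
    (m : ℕ) (hm : 0 < m) (f : ℝ → ℝ) (w : ℕ → ℝ → ℝ)
    (hw : ∀ j < m, ContinuousOn (w j) (Set.Icc a b))
    (hsmooth : ∀ j < m, ∀ t ∈ Set.Icc a b,
      HasDerivWithinAt (iteratedDeriv j f) (iteratedDeriv (j + 1) f t) (Set.Icc a b) t)
    (hint : IntervalIntegrable
      (fun t => (iteratedDeriv m f t + ∑ j ∈ Finset.range m, w j t * iteratedDeriv j f t) ^ 2)
      volume a b) :
    (0 ≤ (∑ j ∈ Finset.range m, (iteratedDeriv j f a) ^ 2) +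
        ∫ t in a..b,
          (iteratedDeriv m f t + ∑ j ∈ Finset.range m, w j t * iteratedDeriv j f t) ^ 2) ∧
    (((∑ j ∈ Finset.range m, (iteratedDeriv j f a) ^ 2) +
        ∫ t in a..b,
          (iteratedDeriv m f t + ∑ j ∈ Finset.range m, w j t * iteratedDeriv j f t) ^ 2) = 0 →
      ∀ t ∈ Set.Icc a b, f t = 0) := by
  have hint_nonneg : 0 ≤ ∫ t in a..b,
      (iteratedDeriv m f t + ∑ j ∈ Finset.range m, w j t * iteratedDeriv j f t) ^ 2 :=
    intervalIntegral.integral_nonneg hab.le (fun t _ => sq_nonneg _)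
  have hsum_nonneg : 0 ≤ ∑ j ∈ Finset.range m, (iteratedDeriv j f a) ^ 2 :=
    Finset.sum_nonneg fun j _ => sq_nonneg _
  refine ⟨add_nonneg hsum_nonneg hint_nonneg, fun hzero => ?_⟩
  -- notation
  set g : ℕ → ℝ → ℝ := fun j => iteratedDeriv j f with hgdef
  set L : ℝ → ℝ := fun t => g m t + ∑ j ∈ Finset.range m, w j t * g j t with hLdef
  -- both pieces vanish
  have hsum0 : ∑ j ∈ Finset.range m, (g j a) ^ 2 = 0 := le_antisymm (by linarith) hsum_nonneg
  have hint0 : (∫ t in a..b, (L t) ^ 2) = 0 := by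
    have := hzero
    exact le_antisymm (by linarith) (intervalIntegral.integral_nonneg hab.le (fun t _ => sq_nonneg _))
  have hga : ∀ j < m, g j a = 0 := by
    intro j hj
    have h := (Finset.sum_eq_zero_iff_of_nonneg (fun j _ => sq_nonneg (g j a))).1 hsum0 j
      (Finset.mem_range.2 hj)
    exact pow_eq_zero_iff two_ne_zero |>.1 h
  -- L vanishes a.e.
  have hI : IntegrableOn (fun t => (L t) ^ 2) (Set.Ioc a b) volume := hint.1
  have haeL : ∀ᵐ t ∂(volume.restrict (Set.Ioc a b)), L t = 0 := by
    have h := (integral_eq_zero_iff_of_nonneg_ae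
      (Filter.Eventually.of_forall fun t => sq_nonneg (L t)) hI).1
      (by rw [← intervalIntegral.integral_of_le hab.le]; exact hint0)
    filter_upwards [h] with t ht
    exact pow_eq_zero_iff two_ne_zero |>.1 ht
  -- continuity of the lower derivatives
  have hgc : ∀ j < m, ContinuousOn (g j) (Set.Icc a b) :=
    fun j hj t ht => (hsmooth j hj t ht).continuousWithinAt
  -- the continuous substitute for g m
  set p : ℝ → ℝ := fun s => -(∑ j ∈ Finset.range m, w j s * g j s) with hpdef
  have hpc : ContinuousOn p (Set.Icc a b) := by
    apply ContinuousOn.neg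
    apply continuousOn_finset_sum
    intro j hj
    exact (hw j (Finset.mem_range.1 hj)).mul (hgc j (Finset.mem_range.1 hj))
  have haem : ∀ᵐ s ∂(volume.restrict (Set.Ioc a b)), g m s = p s := by
    filter_upwards [haeL] with s hs
    have : g m s + ∑ j ∈ Finset.range m, w j s * g j s = 0 := hs
    simp only [hpdef]
    linarith
  -- bound on the coefficients
  have hWex : ∀ j : ℕ, ∃ Wj : ℝ, j < m → ∀ s ∈ Set.Icc a b, |w j s| ≤ Wj := by
    intro j
    by_cases hj : j < m
    · obtain ⟨C, hC⟩ := isCompact_Icc.exists_bound_of_continuousOn (hw j hj)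
      exact ⟨C, fun _ s hs => hC s hs⟩
    · exact ⟨0, fun h => absurd h hj⟩
  choose Wf hWf using hWex
  set W : ℝ := ∑ j ∈ Finset.range m, max (Wf j) 0 with hWdef
  have hW0 : 0 ≤ W := Finset.sum_nonneg fun j _ => le_max_right _ _
  have hWb : ∀ j < m, ∀ s ∈ Set.Icc a b, |w j s| ≤ W := by
    intro j hj s hs
    calc |w j s| ≤ Wf j := hWf j hj s hs
      _ ≤ max (Wf j) 0 := le_max_left _ _
      _ ≤ W := Finset.single_le_sum (f := fun j => max (Wf j) 0)
          (fun i _ => le_max_right _ _) (Finset.mem_range.2 hj)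
  -- the comparison function
  set u : ℝ → ℝ := fun s => ∑ j ∈ Finset.range m, |g j s| with hudef
  have huc : ContinuousOn u (Set.Icc a b) := by
    apply continuousOn_finset_sum
    intro j hj
    exact (hgc j (Finset.mem_range.1 hj)).abs
  have hu0 : ∀ s, 0 ≤ u s := fun s => Finset.sum_nonneg fun j _ => abs_nonneg _
  -- pointwise bound |p s| ≤ W * u s
  have hpb : ∀ s ∈ Set.Icc a b, |p s| ≤ W * u s := by
    intro s hs
    have : |p s| ≤ ∑ j ∈ Finset.range m, |w j s * g j s| := by
      rw [hpdef]; simp only [abs_neg]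
      exact Finset.abs_sum_le_sum_abs _ _
    refine this.trans ?_
    rw [hudef]
    simp only [Finset.mul_sum]
    apply Finset.sum_le_sum
    intro j hj
    rw [abs_mul]
    exact mul_le_mul_of_nonneg_right (hWb j (Finset.mem_range.1 hj) s hs) (abs_nonneg _)
  -- FTC for each derivative
  have hftc : ∀ j < m, ∀ t ∈ Set.Icc a b, g j t = ∫ s in a..t, g (j + 1) s := by
    intro j hj t ht
    have hii : IntervalIntegrable (g (j + 1)) volume a t := by
      rcases lt_or_eq_of_le (Nat.succ_le_of_lt hj) with h | h
      · exact ((hgc (j + 1) h).mono (Set.Icc_subset_Icc le_rfl ht.2)).intervalIntegrable_of_Icc ht.1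
      · rw [show j + 1 = m from h]
        rw [intervalIntegrable_iff_integrableOn_Ioc_of_le ht.1]
        have hip : IntegrableOn p (Set.Ioc a t) volume :=
          ((hpc.mono (Set.Icc_subset_Icc le_rfl ht.2)).integrableOn_Icc).mono_set
            Set.Ioc_subset_Icc_self
        refine hip.congr ?_
        have haet : ∀ᵐ s ∂(volume.restrict (Set.Ioc a t)), g m s = p s :=
          ae_restrict_of_ae_restrict_of_subset (Set.Ioc_subset_Ioc le_rfl ht.2) haem
        filter_upwards [haet] with s hs
        exact hs.symm
    rcases eq_or_lt_of_le ht.1 with h | h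
    · rw [← h, intervalIntegral.integral_same, hga j hj]
    · have key := intervalIntegral.integral_eq_sub_of_hasDeriv_right_of_le ht.1
        ((hgc j hj).mono (Set.Icc_subset_Icc le_rfl ht.2))
        (fun x hx => ((hsmooth j hj x ⟨hx.1.le, hx.2.le.trans ht.2⟩).hasDerivAt
          (Icc_mem_nhds hx.1 (lt_of_lt_of_le hx.2 ht.2))).hasDerivWithinAt) hii
      rw [key, hga j hj, sub_zero]
  -- write m = n + 1
  obtain ⟨n, rfl⟩ : ∃ n, m = n + 1 := ⟨m - 1, (Nat.succ_pred_eq_of_pos hm).symm⟩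
  -- continuity of the summand family
  have hvcont : ∀ j, ContinuousOn (fun s => if j < n then |g (j + 1) s| else W * u s)
      (Set.Icc a b) := by
    intro j
    by_cases hjn : j < n
    · simp only [if_pos hjn]
      exact (hgc (j + 1) (by omega)).abs
    · simp only [if_neg hjn]
      exact continuousOn_const.mul huc
  -- the key integral inequality
  have key : ∀ t ∈ Set.Icc a b, u t ≤ ∫ s in a..t, (1 + W) * u s := by
    intro t ht
    have hIsub : Set.Icc a t ⊆ Set.Icc a b := Set.Icc_subset_Icc le_rfl ht.2
    have huii : IntervalIntegrable (fun s => (1 + W) * u s) volume a t :=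
      ((continuousOn_const.mul huc).mono hIsub).intervalIntegrable_of_Icc ht.1
    have hvii : ∀ j ∈ Finset.range (n + 1), IntervalIntegrable
        (fun s => if j < n then |g (j + 1) s| else W * u s) volume a t :=
      fun j _ => ((hvcont j).mono hIsub).intervalIntegrable_of_Icc ht.1
    have habs : ∀ j ∈ Finset.range (n + 1),
        |g j t| ≤ ∫ s in a..t, (if j < n then |g (j + 1) s| else W * u s) := by
      intro j hj
      have hjm : j < n + 1 := Finset.mem_range.1 hj
      by_cases hjn : j < n
      · simp only [if_pos hjn]
        rw [hftc j hjm t ht]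
        simpa [Real.norm_eq_abs] using
          intervalIntegral.norm_integral_le_integral_norm (f := g (j + 1)) (μ := volume)
            (a := a) (b := t) ht.1
      · have hjn' : j = n := by omega
        subst hjn'
        simp only [if_neg hjn]
        rw [hftc j (by omega) t ht]
        have hiqe : (∫ s in a..t, g (j + 1) s) = ∫ s in a..t, p s := by
          apply intervalIntegral.integral_congr_ae
          have haet := ae_restrict_of_ae_restrict_of_subset
            (Set.Ioc_subset_Ioc le_rfl ht.2) haem
          have h' := (ae_restrict_iff' measurableSet_Ioc).1 haet
          rw [Set.uIoc_of_le ht.1]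
          exact h'
        rw [hiqe]
        calc |∫ s in a..t, p s| ≤ ∫ s in a..t, |p s| := by
              simpa [Real.norm_eq_abs] using
                intervalIntegral.norm_integral_le_integral_norm (f := p) (μ := volume)
                  (a := a) (b := t) ht.1
          _ ≤ ∫ s in a..t, W * u s := by
              apply intervalIntegral.integral_mono_on ht.1
                (((hpc.mono hIsub).abs).intervalIntegrable_of_Icc ht.1)
                (((continuousOn_const.mul huc).mono hIsub).intervalIntegrable_of_Icc ht.1)
              intro s hs
              exact hpb s (hIsub hs)
    calc u t = ∑ j ∈ Finset.range (n + 1), |g j t| := rfl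
      _ ≤ ∑ j ∈ Finset.range (n + 1),
            ∫ s in a..t, (if j < n then |g (j + 1) s| else W * u s) :=
          Finset.sum_le_sum habs
      _ = ∫ s in a..t, ∑ j ∈ Finset.range (n + 1),
            (if j < n then |g (j + 1) s| else W * u s) :=
          (intervalIntegral.integral_finset_sum hvii).symm
      _ ≤ ∫ s in a..t, (1 + W) * u s := by
          apply intervalIntegral.integral_mono_on ht.1
            (((continuousOn_finset_sum _ (fun j _ => hvcont j)).mono hIsub).intervalIntegrable_of_Icc ht.1)
            huii
          intro s hs
          have hs' : s ∈ Set.Icc a b := hIsub hs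
          rw [Finset.sum_range_succ]
          simp only [lt_irrefl, if_false]
          have h1 : ∑ j ∈ Finset.range n, (if j < n then |g (j + 1) s| else W * u s)
              = ∑ j ∈ Finset.range n, |g (j + 1) s| :=
            Finset.sum_congr rfl fun j hj => if_pos (Finset.mem_range.1 hj)
          rw [h1]
          have h2 : u s = (∑ j ∈ Finset.range n, |g (j + 1) s|) + |g 0 s| :=
            Finset.sum_range_succ' _ _
          have h3 : 0 ≤ |g 0 s| := abs_nonneg _
          nlinarith [hu0 s, hW0]
  -- Gronwall
  set U : ℝ → ℝ := fun t => ∫ s in a..t, (1 + W) * u s with hUdef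
  have hWuc : ContinuousOn (fun s => (1 + W) * u s) (Set.Icc a b) := continuousOn_const.mul huc
  have hUcont : ContinuousOn U (Set.Icc a b) := by
    have h := intervalIntegral.continuousOn_primitive_interval (a := a) (b := b)
      (f := fun s => (1 + W) * u s) (μ := volume)
      (by rw [Set.uIcc_of_le hab.le]; exact hWuc.integrableOn_Icc)
    rwa [Set.uIcc_of_le hab.le] at h
  have hUderiv : ∀ x ∈ Set.Ico a b, HasDerivWithinAt U ((1 + W) * u x) (Set.Ici x) x := by
    intro x hx
    have hx' : x ∈ Set.Icc a b := ⟨hx.1, hx.2.le⟩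
    have hmem : Set.Icc a b ∈ nhdsWithin x (Set.Ioi x) := Icc_mem_nhdsGT_of_mem hx
    exact intervalIntegral.integral_hasDerivWithinAt_right
      (s := Set.Ici x) (t := Set.Ioi x)
      ((hWuc.mono (Set.Icc_subset_Icc le_rfl hx.2.le)).intervalIntegrable_of_Icc hx.1)
      ⟨Set.Icc a b, hmem, hWuc.aestronglyMeasurable measurableSet_Icc⟩
      ((hWuc x hx').mono_of_mem_nhdsWithin hmem)
  have hgron := norm_le_gronwallBound_of_norm_deriv_right_le (δ := 0) (K := 1 + W) (ε := 0)
    hUcont hUderiv (by simp [hUdef])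
    (fun x hx => by
      have hx' : x ∈ Set.Icc a b := ⟨hx.1, hx.2.le⟩
      have h1 : u x ≤ U x := key x hx'
      have h2 : 0 ≤ u x := hu0 x
      have h3 : U x ≤ |U x| := le_abs_self _
      rw [Real.norm_eq_abs, Real.norm_eq_abs, abs_of_nonneg (by positivity)]
      nlinarith [hW0])
  intro t ht
  have hUt := hgron t ht
  rw [gronwallBound_ε0_δ0, Real.norm_eq_abs] at hUt
  have hut : u t = 0 := by
    have h1 : u t ≤ U t := key t ht
    have h2 : U t ≤ |U t| := le_abs_self _
    have := hu0 t
    linarith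
  have h0 : |g 0 t| ≤ u t :=
    Finset.single_le_sum (f := fun j => |g j t|) (fun j _ => abs_nonneg _)
      (Finset.mem_range.2 (Nat.succ_pos n))
  have hg0 : g 0 t = 0 := abs_eq_zero.1 (le_antisymm (by linarith [hu0 t, h0]) (abs_nonneg _))
  simpa [hgdef, iteratedDeriv_zero] using hg0
end

section
/- Let G(t,u) = ∑_{i=1}^m u_i(t) u_i*(u) for u ≤ t and G(t,u) = 0 for u > t, where (u₁*(t),...,u_m*(t)) is the last row of W(t)^{−1}. If h ∈ L²[a,b] and r(t) = ∫_a^b G(t,u) h(u) du, then r ∈ H^m[a,b], (Lr)(t) = h(t) for almost every t, and r^{(j)}(a) = 0 for j = 0,...,m−1. -/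
open MeasureTheory Set Filter Topology

/-- A.e. fundamental theorem of calculus for integrable functions (Lebesgue). -/
lemma ae_hasDerivAt_primitive (f : ℝ → ℝ) (hf : Integrable f) (a : ℝ) :
    ∀ᵐ x ∂(volume : Measure ℝ), HasDerivAt (fun t => ∫ s in a..t, f s) (f x) x := by
  have hloc : LocallyIntegrable f volume := hf.locallyIntegrable
  filter_upwards [(IsUnifLocDoublingMeasure.vitaliFamily (volume : Measure ℝ) 1).ae_tendsto_average
    hloc] with x hx
  set F : ℝ → ℝ := fun t => ∫ s in a..t, f s with hF
  have hsub : ∀ y z : ℝ, F z - F y = ∫ s in y..z, f s := fun y z =>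
    intervalIntegral.integral_interval_sub_left hf.intervalIntegrable hf.intervalIntegrable
  rw [hasDerivAt_iff_tendsto_slope]
  rw [← nhdsLT_sup_nhdsGT, tendsto_sup]
  constructor
  · have h1 : Tendsto (fun z => ⨍ y in Icc z x, f y) (𝓝[<] x) (𝓝 (f x)) :=
      hx.comp (Real.tendsto_Icc_vitaliFamily_left x)
    refine h1.congr' ?_
    filter_upwards [self_mem_nhdsWithin] with z (hz : z < x)
    rw [setAverage_eq, MeasureTheory.integral_Icc_eq_integral_Ioc,
      ← intervalIntegral.integral_of_le hz.le, Real.volume_real_Icc_of_le hz.le,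
      smul_eq_mul, slope_def_field, ← hsub z x,
      inv_mul_eq_div, div_eq_div_iff (by linarith) (by linarith)]
    ring
  · have h1 : Tendsto (fun z => ⨍ y in Icc x z, f y) (𝓝[>] x) (𝓝 (f x)) :=
      hx.comp (Real.tendsto_Icc_vitaliFamily_right x)
    refine h1.congr' ?_
    filter_upwards [self_mem_nhdsWithin] with z (hz : x < z)
    rw [setAverage_eq, MeasureTheory.integral_Icc_eq_integral_Ioc,
      ← intervalIntegral.integral_of_le hz.le, Real.volume_real_Icc_of_le hz.le,
      smul_eq_mul, slope_def_field, ← hsub x z,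
      inv_mul_eq_div, div_eq_div_iff (by linarith) (by linarith)]

/-- Let `G(t,u) = ∑ i, u i t * u* i u` for `u ≤ t` and `0` otherwise, where
`(u* 1 t, ..., u* m t)` is the last row of `W(t)⁻¹`. If `h ∈ L²[a,b]` and
`r(t) = ∫_a^b G(t,u) h(u) du`, then `r ∈ H^m[a,b]` (its derivatives up to order `m-1`
exist on `[a,b]`, the `(m-1)`-st being continuous), `(Lr)(t) = h(t)` for almost every
`t ∈ [a,b]`, and `r^{(j)}(a) = 0` for `j = 0, ..., m-1`. -/
theorem greens_function_solves_ode
    {a b : ℝ} (hab : a < b)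
    (m : ℕ) (hm : 0 < m) (u : Fin m → ℝ → ℝ)
    (hu : ∀ i, ContDiff ℝ (m : ℕ∞) (u i))
    (w : ℕ → ℝ → ℝ) (hw : ∀ j < m, ContinuousOn (w j) (Set.Icc a b))
    (hL : ∀ i, ∀ t ∈ Set.Icc a b,
      iteratedDeriv m (u i) t + ∑ j ∈ Finset.range m, w j t * iteratedDeriv j (u i) t = 0)
    (W : ℝ → Matrix (Fin m) (Fin m) ℝ)
    (hWdef : ∀ t, W t = Matrix.of fun i j : Fin m => iteratedDeriv (j : ℕ) (u i) t)
    (hW : ∀ t ∈ Set.Icc a b, (W t).det ≠ 0)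
    (ustar : Fin m → ℝ → ℝ)
    (hustar : ∀ i t, ustar i t = (W t)⁻¹ ⟨m - 1, Nat.sub_lt hm Nat.one_pos⟩ i)
    (h : ℝ → ℝ) (hh : MemLp h 2 (volume.restrict (Set.Icc a b)))
    (r : ℝ → ℝ)
    (hr : ∀ t, r t = ∫ s in a..b, (if s ≤ t then ∑ i, u i t * ustar i s else 0) * h s) :
    (∀ j < m - 1, ∀ t ∈ Set.Icc a b,
      HasDerivWithinAt (iteratedDeriv j r) (iteratedDeriv (j + 1) r t) (Set.Icc a b) t) ∧
    ContinuousOn (iteratedDeriv (m - 1) r) (Set.Icc a b) ∧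
    (∀ᵐ t ∂volume, t ∈ Set.Icc a b →
      HasDerivAt (iteratedDeriv (m - 1) r)
        (h t - ∑ j ∈ Finset.range m, w j t * iteratedDeriv j r t) t) ∧
    (∀ j < m, iteratedDeriv j r a = 0) := by
  classical
  have hab' : a ≤ b := hab.le
  have hm1 : (m - 1) + 1 = m := Nat.succ_pred_eq_of_pos hm
  -- continuity and differentiability of iterated derivatives
  have hcont : ∀ (i : Fin m) (j : ℕ), j ≤ m → Continuous (iteratedDeriv j (u i)) := by
    intro i j hj
    exact (hu i).continuous_iteratedDeriv j (by exact_mod_cast hj)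
  have hDeriv : ∀ (i : Fin m) (j : ℕ), j < m →
      ∀ t, HasDerivAt (iteratedDeriv j (u i)) (iteratedDeriv (j + 1) (u i) t) t := by
    intro i j hj t
    have hd : Differentiable ℝ (iteratedDeriv j (u i)) :=
      (hu i).differentiable_iteratedDeriv j (by exact_mod_cast hj)
    have h2 := (hd t).hasDerivAt
    rwa [← iteratedDeriv_succ] at h2
  -- matrix continuity
  have hWc : Continuous W := by
    apply continuous_matrix
    intro i j
    have he : (fun t => W t i j) = iteratedDeriv (j : ℕ) (u i) := by
      funext t; rw [hWdef]; rfl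
    rw [he]
    exact hcont i j j.2.le
  have hdetc : Continuous fun t => (W t).det := hWc.matrix_det
  have hadjc : Continuous fun t => (W t).adjugate := hWc.matrix_adjugate
  set lastRow : Fin m := ⟨m - 1, Nat.sub_lt hm Nat.one_pos⟩ with hlast
  have hustar_eq : ∀ i t, ustar i t = ((W t).det)⁻¹ * (W t).adjugate lastRow i := by
    intro i t
    rw [hustar i t, Matrix.inv_def, Matrix.smul_apply, smul_eq_mul, Ring.inverse_eq_inv]
  have hadjc' : ∀ i, Continuous fun t => (W t).adjugate lastRow i := fun i =>
    (continuous_apply i).comp ((continuous_apply lastRow).comp hadjc)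
  have hustarcont : ∀ i, ContinuousOn (ustar i) (Set.Icc a b) := by
    intro i
    have hc : ContinuousOn (fun t => ((W t).det)⁻¹ * (W t).adjugate lastRow i) (Set.Icc a b) := by
      apply ContinuousOn.mul
      · intro t ht
        exact ((hdetc.continuousAt).inv₀ (hW t ht)).continuousWithinAt
      · exact (hadjc' i).continuousOn
    exact hc.congr fun t _ => hustar_eq i t
  -- integrability of h
  haveI : IsFiniteMeasure (volume.restrict (Set.Icc a b)) := by
    constructor
    rw [Measure.restrict_apply_univ, Real.volume_Icc]
    exact ENNReal.ofReal_lt_top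
  have hh1 : IntegrableOn h (Set.Icc a b) := hh.integrable (by norm_num)
  -- g, G, H
  set g : Fin m → ℝ → ℝ := fun i s => ustar i s * h s with hgdef
  have hgint : ∀ i, IntegrableOn (g i) (Set.Icc a b) :=
    fun i => hh1.continuousOn_mul (hustarcont i) isCompact_Icc
  set G : Fin m → ℝ → ℝ := fun i => (Set.Ioc a b).indicator (g i) with hGdef
  have hGzero : ∀ i s, s ∉ Set.Ioc a b → G i s = 0 := fun i s hs =>
    Set.indicator_of_notMem hs _
  have hGg : ∀ i, ∀ s ∈ Set.Ioc a b, G i s = g i s := fun i s hs => Set.indicator_of_mem hs _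
  have hGint : ∀ i, Integrable (G i) volume := fun i =>
    ((hgint i).mono_set Set.Ioc_subset_Icc_self).integrable_indicator measurableSet_Ioc
  set H : ℝ → ℝ := (Set.Ioc a b).indicator fun s => |h s| with hHdef
  have habs : IntegrableOn (fun s => |h s|) (Set.Icc a b) volume := hh1.abs
  have hHint : Integrable H volume :=
    (habs.mono_set Set.Ioc_subset_Icc_self).integrable_indicator measurableSet_Ioc
  -- primitives
  set c : Fin m → ℝ → ℝ := fun i t => ∫ s in a..t, G i s with hcdef
  have hc_apply : ∀ i t, c i t = ∫ s in a..t, G i s := fun i t => by rw [hcdef]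
  have hccont : ∀ i, Continuous (c i) := fun i =>
    intervalIntegral.continuous_primitive (fun _ _ => (hGint i).intervalIntegrable) a
  have hcsub : ∀ i (x y : ℝ), c i y - c i x = ∫ s in x..y, G i s := by
    intro i x y
    rw [hc_apply i x, hc_apply i y]
    exact intervalIntegral.integral_interval_sub_left (hGint i).intervalIntegrable
      (hGint i).intervalIntegrable
  have hca : ∀ i, ∀ t, t ≤ a → c i t = 0 := by
    intro i t ht
    have he : Set.EqOn (G i) (fun _ => (0 : ℝ)) (Set.uIcc a t) := by
      intro s hs
      rw [Set.uIcc_comm, Set.uIcc_of_le ht] at hs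
      exact hGzero i s fun hmem => absurd (lt_of_lt_of_le hmem.1 hs.2) (lt_irrefl a)
    rw [hc_apply i t, intervalIntegral.integral_congr he]
    simp
  have hcb : ∀ i, ∀ t, b ≤ t → c i t = c i b := by
    intro i t ht
    have hsub2 : c i t - c i b = ∫ s in b..t, G i s := hcsub i b t
    have hz : ∫ s in b..t, G i s = 0 := by
      have he : ∀ᵐ s ∂(volume : Measure ℝ), s ∈ Set.uIoc b t → G i s = (0 : ℝ) := by
        refine Filter.Eventually.of_forall fun s hs => ?_
        rw [Set.uIoc_of_le ht] at hs
        exact hGzero i s fun hmem => absurd hmem.2 (not_le.mpr hs.1)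
      exact (intervalIntegral.integral_congr_ae he).trans (by simp)
    have := hsub2.trans hz
    linarith [this]
  have hca0 : ∀ i, c i a = 0 := fun i => hca i a le_rfl
  -- r in terms of c
  have hIndOn : ∀ (i : Fin m) (t : ℝ),
      IntegrableOn (fun s => if s ≤ t then g i s else 0) (Set.Icc a b) := by
    intro i t
    have h1 : IntegrableOn ((Set.Iic t).indicator (g i)) (Set.Icc a b) :=
      (hgint i).indicator measurableSet_Iic
    refine h1.congr_fun ?_ measurableSet_Icc
    intro s _
    simp [Set.indicator_apply, Set.mem_Iic]
  have hrc : ∀ t, r t = ∑ i, u i t * c i t := by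
    intro t
    rw [hr t]
    have e1 : ∀ᵐ s ∂(volume : Measure ℝ), s ∈ Set.uIoc a b →
        ((if s ≤ t then ∑ i, u i t * ustar i s else 0) * h s
          = ∑ i, u i t * (if s ≤ t then g i s else 0)) := by
      refine Filter.Eventually.of_forall fun s _ => ?_
      split_ifs with hst
      · rw [Finset.sum_mul]
        exact Finset.sum_congr rfl fun i _ => by simp only [hgdef]; ring
      · simp
    rw [intervalIntegral.integral_congr_ae e1,
      intervalIntegral.integral_finset_sum (fun i _ =>
        (((hIndOn i t).mono_set (by rw [Set.uIcc_of_le hab'])).intervalIntegrable).const_mul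
          (u i t))]
    refine Finset.sum_congr rfl fun i _ => ?_
    rw [intervalIntegral.integral_const_mul]
    congr 1
    rcases lt_or_ge t a with hta | hat
    · rw [hca i t hta.le]
      have he : Set.EqOn (fun s => if s ≤ t then g i s else 0) (fun _ => (0 : ℝ))
          (Set.uIcc a b) := by
        intro s hs
        rw [Set.uIcc_of_le hab'] at hs
        simp [not_le.mpr (lt_of_lt_of_le hta hs.1)]
      rw [intervalIntegral.integral_congr he]
      simp
    · rcases le_or_gt t b with htb | hbt
      · have hint1 : IntervalIntegrable (fun s => if s ≤ t then g i s else 0) volume a t :=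
          ((hIndOn i t).mono_set (by
            rw [Set.uIcc_of_le hat]
            exact Set.Icc_subset_Icc_right htb)).intervalIntegrable
        have hint2 : IntervalIntegrable (fun s => if s ≤ t then g i s else 0) volume t b :=
          ((hIndOn i t).mono_set (by
            rw [Set.uIcc_of_le htb]
            exact Set.Icc_subset_Icc_left hat)).intervalIntegrable
        rw [← intervalIntegral.integral_add_adjacent_intervals hint1 hint2]
        have ha1 : ∫ s in a..t, (if s ≤ t then g i s else 0) = ∫ s in a..t, G i s := by
          apply intervalIntegral.integral_congr_ae
          refine Filter.Eventually.of_forall fun s hs => ?_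
          rw [Set.uIoc_of_le hat] at hs
          rw [if_pos hs.2, hGg i s ⟨hs.1, hs.2.trans htb⟩]
        have ha2 : ∫ s in t..b, (if s ≤ t then g i s else 0) = 0 := by
          have he : ∀ᵐ s ∂(volume : Measure ℝ), s ∈ Set.uIoc t b →
              (if s ≤ t then g i s else 0) = (0 : ℝ) := by
            refine Filter.Eventually.of_forall fun s hs => ?_
            rw [Set.uIoc_of_le htb] at hs
            simp [not_le.mpr hs.1]
          exact (intervalIntegral.integral_congr_ae he).trans (by simp)
        rw [ha1, ha2, add_zero]
      · rw [hcb i t hbt.le]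
        have ha1 : ∫ s in a..b, (if s ≤ t then g i s else 0) = ∫ s in a..b, G i s := by
          apply intervalIntegral.integral_congr_ae
          refine Filter.Eventually.of_forall fun s hs => ?_
          rw [Set.uIoc_of_le hab'] at hs
          rw [if_pos (hs.2.trans hbt.le), hGg i s hs]
        rw [ha1]
  -- the algebraic identity from W⁻¹ * W = 1
  have hsum : ∀ t ∈ Set.Icc a b, ∀ j : ℕ, j < m →
      ∑ i, iteratedDeriv j (u i) t * ustar i t = if j = m - 1 then 1 else 0 := by
    intro t ht j hj
    have hinv := Matrix.nonsing_inv_mul (W t) (isUnit_iff_ne_zero.mpr (hW t ht))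
    have h2 : ((W t)⁻¹ * W t) lastRow ⟨j, hj⟩
        = (1 : Matrix (Fin m) (Fin m) ℝ) lastRow ⟨j, hj⟩ := by rw [hinv]
    rw [Matrix.mul_apply, Matrix.one_apply] at h2
    have h3 : ∑ i, iteratedDeriv j (u i) t * ustar i t
        = ∑ k, (W t)⁻¹ lastRow k * W t k ⟨j, hj⟩ := by
      refine Finset.sum_congr rfl fun k _ => ?_
      rw [hustar k t, hWdef]
      simp only [Matrix.of_apply]
      ring
    have h4 : (lastRow = (⟨j, hj⟩ : Fin m)) ↔ j = m - 1 := by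
      rw [Fin.ext_iff]
      exact eq_comm
    rw [h3, h2]
    simp [h4]
  have hvanish : ∀ j, j < m - 1 → ∀ s ∈ Set.Icc a b,
      ∑ i, iteratedDeriv j (u i) s * ustar i s = 0 := by
    intro j hj s hs
    rw [hsum s hs j (lt_of_lt_of_le hj (Nat.sub_le m 1)), if_neg (Nat.ne_of_lt hj)]
  -- bound on ustar
  obtain ⟨M, hM0, hMb⟩ : ∃ M, 0 ≤ M ∧ ∀ i, ∀ s ∈ Set.Icc a b, |ustar i s| ≤ M := by
    have hex : ∀ i : Fin m, ∃ Ci : ℝ, ∀ s ∈ Set.Icc a b, ‖ustar i s‖ ≤ Ci := fun i =>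
      isCompact_Icc.exists_bound_of_continuousOn (hustarcont i)
    choose C hC using hex
    refine ⟨∑ i, |C i|, Finset.sum_nonneg fun i _ => abs_nonneg _, fun i s hs => ?_⟩
    calc |ustar i s| ≤ C i := hC i s hs
      _ ≤ |C i| := le_abs_self _
      _ ≤ ∑ k, |C k| := Finset.single_le_sum (f := fun k => |C k|)
          (fun k _ => abs_nonneg _) (Finset.mem_univ i)
  -- the primitive of H
  set Φ : ℝ → ℝ := fun x => ∫ s in a..x, H s with hΦdef
  have hΦ_apply : ∀ x, Φ x = ∫ s in a..x, H s := fun x => by rw [hΦdef]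
  have hΦcont : Continuous Φ :=
    intervalIntegral.continuous_primitive (fun _ _ => hHint.intervalIntegrable) a
  have hΦsub : ∀ x y : ℝ, Φ y - Φ x = ∫ s in x..y, H s := by
    intro x y
    rw [hΦ_apply x, hΦ_apply y]
    exact intervalIntegral.integral_interval_sub_left hHint.intervalIntegrable
      hHint.intervalIntegrable
  -- the functions F j
  set F : ℕ → ℝ → ℝ := fun j t => ∑ i, iteratedDeriv j (u i) t * c i t with hFdef
  have hF_apply : ∀ j t, F j t = ∑ i, iteratedDeriv j (u i) t * c i t := fun j t => by
    rw [hFdef]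
  -- key derivative lemma
  have hkey : ∀ j : ℕ, j < m →
      (∀ s ∈ Set.Icc a b, ∑ i, iteratedDeriv j (u i) s * ustar i s = 0) →
      ∀ t, HasDerivAt (F j) (F (j + 1) t) t := by
    intro j hjm hvan t
    have hφ : ∀ (d : Fin m → ℝ) (t0 : ℝ),
        HasDerivAt (fun t' => ∑ i, iteratedDeriv j (u i) t' * d i)
          (∑ i, iteratedDeriv (j + 1) (u i) t0 * d i) t0 := by
      intro d t0
      exact HasDerivAt.fun_sum fun i _ => (hDeriv i j hjm t0).mul_const (d i)
    rcases lt_or_ge t a with hta | hat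
    · -- t < a
      have hev : F j =ᶠ[𝓝 t] fun _ => (0 : ℝ) := by
        filter_upwards [Iio_mem_nhds hta] with t' (ht' : t' < a)
        rw [hF_apply]
        exact Finset.sum_eq_zero fun i _ => by rw [hca i t' ht'.le, mul_zero]
      have h1 := (hasDerivAt_const t (0 : ℝ)).congr_of_eventuallyEq hev
      have h2 : F (j + 1) t = 0 := by
        rw [hF_apply]
        exact Finset.sum_eq_zero fun i _ => by rw [hca i t hta.le, mul_zero]
      rw [h2]
      exact h1
    rcases le_or_gt t b with htb | hbt
    swap
    · -- b < t
      have hev : F j =ᶠ[𝓝 t] fun t' => ∑ i, iteratedDeriv j (u i) t' * c i b := by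
        filter_upwards [Ioi_mem_nhds hbt] with t' (ht' : b < t')
        rw [hF_apply]
        exact Finset.sum_congr rfl fun i _ => by rw [hcb i t' ht'.le]
      have h1 := (hφ (fun i => c i b) t).congr_of_eventuallyEq hev
      have h2 : F (j + 1) t = ∑ i, iteratedDeriv (j + 1) (u i) t * c i b := by
        rw [hF_apply]
        exact Finset.sum_congr rfl fun i _ => by rw [hcb i t hbt.le]
      rw [h2]
      exact h1
    · -- a ≤ t ≤ b
      have htI : t ∈ Set.Icc a b := ⟨hat, htb⟩
      obtain ⟨K, hK0, hKlip⟩ : ∃ K, 0 ≤ K ∧ ∀ i : Fin m, ∀ x ∈ Set.Icc (a - 1) (b + 1),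
          ∀ y ∈ Set.Icc (a - 1) (b + 1),
          |iteratedDeriv j (u i) x - iteratedDeriv j (u i) y| ≤ K * |x - y| := by
        have hbnd : ∀ i : Fin m, ∃ Ci, ∀ s ∈ Set.Icc (a - 1) (b + 1),
            ‖iteratedDeriv (j + 1) (u i) s‖ ≤ Ci := fun i =>
          isCompact_Icc.exists_bound_of_continuousOn ((hcont i (j + 1) hjm).continuousOn)
        choose C hC using hbnd
        refine ⟨∑ k, |C k|, Finset.sum_nonneg fun k _ => abs_nonneg _, fun i x hx y hy => ?_⟩
        have hK1 : ∀ s ∈ Set.Icc (a - 1) (b + 1),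
            ‖deriv (iteratedDeriv j (u i)) s‖ ≤ ∑ k, |C k| := by
          intro s hs
          rw [← iteratedDeriv_succ]
          calc ‖iteratedDeriv (j + 1) (u i) s‖ ≤ C i := hC i s hs
            _ ≤ |C i| := le_abs_self _
            _ ≤ ∑ k, |C k| := Finset.single_le_sum (f := fun k => |C k|)
                (fun k _ => abs_nonneg _) (Finset.mem_univ i)
        have hdiff : ∀ s ∈ Set.Icc (a - 1) (b + 1),
            DifferentiableAt ℝ (iteratedDeriv j (u i)) s := fun s _ =>
          ((hu i).differentiable_iteratedDeriv j (by exact_mod_cast hjm)) s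
        have := Convex.norm_image_sub_le_of_norm_deriv_le hdiff hK1 (convex_Icc _ _) hy hx
        simpa [Real.norm_eq_abs] using this
      set C0 : ℝ := (m : ℝ) * (K * M) with hC0def
      have hC00 : 0 ≤ C0 := by positivity
      have hD : HasDerivAt (fun t' => ∑ i, iteratedDeriv j (u i) t' * (c i t' - c i t)) 0 t := by
        rw [hasDerivAt_iff_isLittleO]
        have hsimp : (fun t' => (∑ i, iteratedDeriv j (u i) t' * (c i t' - c i t))
            - (∑ i, iteratedDeriv j (u i) t * (c i t - c i t)) - (t' - t) • (0 : ℝ))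
            = fun t' => ∑ i, iteratedDeriv j (u i) t' * (c i t' - c i t) := by
          funext t'
          simp
        rw [hsimp, Asymptotics.isLittleO_iff]
        intro ε hε
        have hεC : 0 < ε / (C0 + 1) := by positivity
        have h1 : ∀ᶠ t' in 𝓝 t, |Φ t' - Φ t| < ε / (C0 + 1) := by
          obtain ⟨δ, hδ, hδ'⟩ := Metric.continuousAt_iff.mp hΦcont.continuousAt (ε / (C0 + 1)) hεC
          filter_upwards [Metric.ball_mem_nhds t hδ] with t' ht'
          simpa [Real.dist_eq] using hδ' ht'
        have h2 : ∀ᶠ t' in 𝓝 t, |t' - t| ≤ 1 := by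
          filter_upwards [Metric.closedBall_mem_nhds t one_pos] with t' ht'
          simpa [Real.dist_eq] using ht'
        filter_upwards [h1, h2] with t' hΦ' hdist
        have ht'mem : t' ∈ Set.Icc (a - 1) (b + 1) := by
          rw [abs_le] at hdist
          constructor
          · linarith [htI.1]
          · linarith [htI.2]
        have hrw : ∑ i, iteratedDeriv j (u i) t' * (c i t' - c i t)
            = ∫ s in t..t', ∑ i, iteratedDeriv j (u i) t' * G i s := by
          rw [intervalIntegral.integral_finset_sum (fun i _ =>
            ((hGint i).const_mul (iteratedDeriv j (u i) t')).intervalIntegrable)]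
          refine Finset.sum_congr rfl fun i _ => ?_
          rw [intervalIntegral.integral_const_mul, hcsub i t t']
        rw [hrw]
        have hptwise : ∀ s ∈ Set.uIoc t t',
            ‖∑ i, iteratedDeriv j (u i) t' * G i s‖ ≤ C0 * |t' - t| * H s := by
          intro s hs
          have hts : |t' - s| ≤ |t' - t| := by
            rw [Set.uIoc_eq_union] at hs
            rcases hs with h1' | h1'
            · rw [Set.mem_Ioc] at h1'
              rw [abs_of_nonneg (by linarith), abs_of_nonneg (by linarith)]
              linarith
            · rw [Set.mem_Ioc] at h1'
              rw [abs_of_nonpos (by linarith), abs_of_nonpos (by linarith)]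
              linarith
          by_cases hsI : s ∈ Set.Ioc a b
          · have hsI' : s ∈ Set.Icc a b := ⟨hsI.1.le, hsI.2⟩
            have hsmem : s ∈ Set.Icc (a - 1) (b + 1) :=
              ⟨by linarith [hsI'.1], by linarith [hsI'.2]⟩
            have hHs : H s = |h s| := Set.indicator_of_mem hsI _
            have hkey2 : ∑ i, iteratedDeriv j (u i) t' * G i s
                = (∑ i, (iteratedDeriv j (u i) t' - iteratedDeriv j (u i) s) * ustar i s)
                  * h s := by
              have e1 : ∑ i, iteratedDeriv j (u i) t' * G i s
                  = (∑ i, iteratedDeriv j (u i) t' * ustar i s) * h s := by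
                rw [Finset.sum_mul]
                refine Finset.sum_congr rfl fun i _ => ?_
                rw [hGg i s hsI]
                simp only [hgdef]
                ring
              rw [e1]
              congr 1
              have e2 : ∑ i, (iteratedDeriv j (u i) t' - iteratedDeriv j (u i) s) * ustar i s
                  = ∑ i, iteratedDeriv j (u i) t' * ustar i s
                    - ∑ i, iteratedDeriv j (u i) s * ustar i s := by
                rw [← Finset.sum_sub_distrib]
                exact Finset.sum_congr rfl fun i _ => by ring
              rw [e2, hvan s hsI', sub_zero]
            rw [hkey2, hHs, Real.norm_eq_abs, abs_mul]
            have hb1 : |∑ i, (iteratedDeriv j (u i) t' - iteratedDeriv j (u i) s) * ustar i s|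
                ≤ C0 * |t' - t| := by
              calc |∑ i, (iteratedDeriv j (u i) t' - iteratedDeriv j (u i) s) * ustar i s|
                  ≤ ∑ i, |(iteratedDeriv j (u i) t' - iteratedDeriv j (u i) s) * ustar i s| :=
                    Finset.abs_sum_le_sum_abs _ _
                _ ≤ ∑ _i : Fin m, K * |t' - t| * M := by
                    refine Finset.sum_le_sum fun i _ => ?_
                    rw [abs_mul]
                    have hl : |iteratedDeriv j (u i) t' - iteratedDeriv j (u i) s|
                        ≤ K * |t' - t| := by
                      refine le_trans (hKlip i t' ht'mem s hsmem) ?_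
                      exact mul_le_mul_of_nonneg_left hts hK0
                    exact mul_le_mul hl (hMb i s hsI') (abs_nonneg _) (by positivity)
                _ = C0 * |t' - t| := by
                    rw [Finset.sum_const, Finset.card_univ, Fintype.card_fin, nsmul_eq_mul,
                      hC0def]
                    ring
            exact mul_le_mul_of_nonneg_right hb1 (abs_nonneg _)
          · simp [hGzero _ s hsI, Set.indicator_of_notMem hsI, hHdef]
        have hbd := intervalIntegral.norm_integral_le_abs_of_norm_le
          ((ae_restrict_iff' measurableSet_uIoc).mpr (Filter.Eventually.of_forall hptwise))
          ((hHint.const_mul (C0 * |t' - t|)).intervalIntegrable)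
        rw [intervalIntegral.integral_const_mul, ← hΦsub t t'] at hbd
        calc ‖∫ s in t..t', ∑ i, iteratedDeriv j (u i) t' * G i s‖
            ≤ |C0 * |t' - t| * (Φ t' - Φ t)| := hbd
          _ = C0 * |t' - t| * |Φ t' - Φ t| := by
              rw [abs_mul, abs_mul, abs_of_nonneg hC00, abs_abs]
          _ ≤ C0 * |t' - t| * (ε / (C0 + 1)) :=
              mul_le_mul_of_nonneg_left hΦ'.le (by positivity)
          _ ≤ ε * ‖t' - t‖ := by
              rw [Real.norm_eq_abs]
              have h5 : C0 / (C0 + 1) ≤ 1 := div_le_one_of_le₀ (by linarith) (by linarith)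
              have h6 : C0 * |t' - t| * (ε / (C0 + 1)) = ε * |t' - t| * (C0 / (C0 + 1)) := by
                ring
              rw [h6]
              calc ε * |t' - t| * (C0 / (C0 + 1)) ≤ ε * |t' - t| * 1 :=
                    mul_le_mul_of_nonneg_left h5 (by positivity)
                _ = ε * |t' - t| := mul_one _
      have hadd := hD.fun_add (hφ (fun i => c i t) t)
      have heq : (fun t' => (∑ i, iteratedDeriv j (u i) t' * (c i t' - c i t))
          + ∑ i, iteratedDeriv j (u i) t' * c i t) = F j := by
        funext t'
        rw [hF_apply, ← Finset.sum_add_distrib]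
        exact Finset.sum_congr rfl fun i _ => by ring
      rw [heq] at hadd
      have h7 : F (j + 1) t = 0 + ∑ i, iteratedDeriv (j + 1) (u i) t * c i t := by
        rw [hF_apply, zero_add]
      rw [h7]
      exact hadd
  -- identification of iterated derivatives of r
  have hF_eq : ∀ j, j ≤ m - 1 → iteratedDeriv j r = F j := by
    intro j
    induction j with
    | zero =>
      intro _
      funext t
      rw [iteratedDeriv_zero, hrc t, hF_apply]
      exact Finset.sum_congr rfl fun i _ => by rw [iteratedDeriv_zero]
    | succ n ih =>
      intro hj
      have hn1 : n ≤ m - 1 := Nat.le_of_succ_le hj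
      have hnm : n < m := lt_of_lt_of_le (Nat.lt_succ_self n) (le_trans hj (Nat.sub_le m 1))
      rw [iteratedDeriv_succ, ih hn1]
      funext t
      exact (hkey n hnm (hvanish n hj) t).deriv
  refine ⟨?_, ?_, ?_, ?_⟩
  · -- first conjunct
    intro j hj t ht
    rw [hF_eq j (le_of_lt hj), hF_eq (j + 1) (Nat.succ_le_of_lt hj)]
    exact (hkey j (lt_of_lt_of_le hj (Nat.sub_le m 1)) (hvanish j hj) t).hasDerivWithinAt
  · -- second conjunct
    rw [hF_eq (m - 1) le_rfl]
    have : Continuous (F (m - 1)) := by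
      have he : F (m - 1) = fun t => ∑ i, iteratedDeriv (m - 1) (u i) t * c i t := by
        funext t; rw [hF_apply]
      rw [he]
      exact continuous_finset_sum _ fun i _ =>
        (hcont i (m - 1) (Nat.sub_le m 1)).mul (hccont i)
    exact this.continuousOn
  · -- third conjunct
    have hae1 : ∀ᵐ t ∂(volume : Measure ℝ), ∀ i, HasDerivAt (c i) (G i t) t := by
      rw [ae_all_iff]
      intro i
      have hp := ae_hasDerivAt_primitive (G i) (hGint i) a
      refine hp.mono fun x hx => ?_
      have he : c i = fun t => ∫ s in a..t, G i s := by funext t; rw [hc_apply]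
      rw [he]
      exact hx
    have hae2 : ∀ᵐ t ∂(volume : Measure ℝ), t ∉ ({a, b} : Set ℝ) := by
      have hz : volume ({a, b} : Set ℝ) = 0 :=
        ((Set.countable_singleton b).insert a).measure_zero volume
      exact measure_eq_zero_iff_ae_notMem.mp hz
    filter_upwards [hae1, hae2] with t hct hab2 htI
    have hta : t ≠ a := fun hh' => hab2 (by simp [hh'])
    have htb : t ≠ b := fun hh' => hab2 (by simp [hh'])
    have htIoo : t ∈ Set.Ioo a b :=
      ⟨lt_of_le_of_ne htI.1 (Ne.symm hta), lt_of_le_of_ne htI.2 htb⟩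
    have hcd : ∀ i, HasDerivAt (c i) (g i t) t := by
      intro i
      have := hct i
      rwa [hGg i t ⟨htIoo.1, htIoo.2.le⟩] at this
    have hd : HasDerivAt (fun y => ∑ i, iteratedDeriv (m - 1) (u i) y * c i y)
        (∑ i, (iteratedDeriv m (u i) t * c i t + iteratedDeriv (m - 1) (u i) t * g i t)) t := by
      have hd0 := HasDerivAt.fun_sum (u := Finset.univ) fun (i : Fin m) _ =>
        (hDeriv i (m - 1) (Nat.sub_lt hm Nat.one_pos) t).fun_mul (hcd i)
      simpa only [hm1] using hd0
    rw [hF_eq (m - 1) le_rfl]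
    have he : F (m - 1) = fun y => ∑ i, iteratedDeriv (m - 1) (u i) y * c i y := by
      funext y; rw [hF_apply]
    rw [he]
    convert hd using 1
    have hrFs : ∑ jj ∈ Finset.range m, w jj t * iteratedDeriv jj r t
        = ∑ jj ∈ Finset.range m, w jj t * F jj t :=
      Finset.sum_congr rfl fun jj hjj => by
        rw [hF_eq jj (Nat.le_pred_of_lt (Finset.mem_range.mp hjj))]
    have e2 : ∑ i, iteratedDeriv (m - 1) (u i) t * g i t = h t := by
      have hs1 := hsum t htI (m - 1) (Nat.sub_lt hm Nat.one_pos)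
      rw [if_pos rfl] at hs1
      calc ∑ i, iteratedDeriv (m - 1) (u i) t * g i t
          = (∑ i, iteratedDeriv (m - 1) (u i) t * ustar i t) * h t := by
            rw [Finset.sum_mul]
            exact Finset.sum_congr rfl fun i _ => by simp only [hgdef]; ring
        _ = 1 * h t := by rw [hs1]
        _ = h t := one_mul _
    have hLr : ∀ i : Fin m, iteratedDeriv m (u i) t
        = -∑ jj ∈ Finset.range m, w jj t * iteratedDeriv jj (u i) t := by
      intro i
      have := hL i t htI
      linarith
    have e1 : ∑ i, iteratedDeriv m (u i) t * c i t
        = -∑ jj ∈ Finset.range m, w jj t * F jj t := by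
      calc ∑ i, iteratedDeriv m (u i) t * c i t
          = ∑ i, ∑ jj ∈ Finset.range m, -(w jj t * (iteratedDeriv jj (u i) t * c i t)) := by
            refine Finset.sum_congr rfl fun i _ => ?_
            rw [hLr i, neg_mul, Finset.sum_mul, ← Finset.sum_neg_distrib]
            exact Finset.sum_congr rfl fun jj _ => by ring
        _ = ∑ jj ∈ Finset.range m, ∑ i, -(w jj t * (iteratedDeriv jj (u i) t * c i t)) :=
            Finset.sum_comm
        _ = -∑ jj ∈ Finset.range m, w jj t * F jj t := by
            rw [← Finset.sum_neg_distrib]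
            refine Finset.sum_congr rfl fun jj _ => ?_
            rw [hF_apply, Finset.mul_sum, ← Finset.sum_neg_distrib]
    rw [hrFs, Finset.sum_add_distrib, e1, e2]
    ring
  · -- fourth conjunct
    intro j hj
    rw [hF_eq j (Nat.le_pred_of_lt hj), hF_apply]
    exact Finset.sum_eq_zero fun i _ => by rw [hca0 i, mul_zero]
end

section
/- Let M = K + λD^{−1} with K symmetric positive semidefinite, D diagonal positive definite, λ > 0, T an n×m matrix of full column rank, and Q an n×(n−m) matrix of full column rank with Q'T = 0. If β̂ = M^{−1}(I − T(T'M^{−1}T)^{−1}T'M^{−1})Y, then T'β̂ = 0, and β̂ = Q(Q'MQ)^{−1}Q'Y; moreover α̂ = (T'M^{−1}T)^{−1}T'M^{−1}Y equals (T'T)^{−1}T'(Y − Mβ̂). -/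
open Matrix

private lemma mulVec_inj_of_rank {n k : ℕ} (A : Matrix (Fin n) (Fin k) ℝ) (hA : A.rank = k) :
    Function.Injective A.mulVec := by
  have h := LinearMap.finrank_range_add_finrank_ker A.mulVecLin
  rw [show Module.finrank ℝ (LinearMap.range A.mulVecLin) = A.rank from rfl, hA,
    Module.finrank_fin_fun] at h
  have hker : LinearMap.ker A.mulVecLin = ⊥ := by
    rw [← Submodule.finrank_eq_zero (R := ℝ)]
    omega
  have := LinearMap.ker_eq_bot.mp hker
  exact this

private lemma conj_posDef {n k : ℕ} {A : Matrix (Fin n) (Fin n) ℝ} (hA : A.PosDef)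
    (B : Matrix (Fin n) (Fin k) ℝ) (hB : Function.Injective B.mulVec) :
    (Bᵀ * A * B).PosDef := by
  have hsemi : (Bᵀ * A * B).PosSemidef := by
    have := hA.posSemidef.conjTranspose_mul_mul_same B
    simpa using this
  refine posDef_iff_dotProduct_mulVec.mpr ⟨hsemi.1, fun x hx => ?_⟩
  have hBx : B.mulVec x ≠ 0 := fun h => hx (hB (by simpa using h))
  have := hA.dotProduct_mulVec_pos hBx
  simpa [← mulVec_mulVec, Matrix.mul_assoc, dotProduct_mulVec, vecMul_transpose,
    Matrix.dotProduct_mulVec] using this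

/-- Let `M = K + λ D⁻¹` with `K` symmetric positive semidefinite, `D` diagonal
positive definite, `λ > 0`, `T` an `n × m` matrix of full column rank and `Q` an
`n × (n-m)` matrix of full column rank with `Qᵀ T = 0` (so the columns of `Q` span the
orthogonal complement of the column space of `T`). If
`β̂ = M⁻¹ (I - T (Tᵀ M⁻¹ T)⁻¹ Tᵀ M⁻¹) Y`, then `Tᵀ β̂ = 0` and
`β̂ = Q (Qᵀ M Q)⁻¹ Qᵀ Y`; moreover `α̂ = (Tᵀ M⁻¹ T)⁻¹ Tᵀ M⁻¹ Y` equals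
`(Tᵀ T)⁻¹ Tᵀ (Y - M β̂)`. -/
theorem reinsch_algorithm_identities
    {n m : ℕ} (hm : 1 ≤ m) (hmn : m < n)
    (K D : Matrix (Fin n) (Fin n) ℝ) (hK : K.PosSemidef) (hDdiag : D.IsDiag)
    (hD : D.PosDef)
    (lam : ℝ) (hlam : 0 < lam)
    (T : Matrix (Fin n) (Fin m) ℝ) (hT : T.rank = m)
    (Q : Matrix (Fin n) (Fin (n - m)) ℝ) (hQ : Q.rank = n - m) (hQT : Qᵀ * T = 0)
    (Y : Fin n → ℝ)
    (M : Matrix (Fin n) (Fin n) ℝ) (hM : M = K + lam • D⁻¹)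
    (β : Fin n → ℝ)
    (hβ : β = (M⁻¹ * (1 - T * (Tᵀ * M⁻¹ * T)⁻¹ * Tᵀ * M⁻¹)).mulVec Y) :
    Tᵀ.mulVec β = 0 ∧
    β = (Q * (Qᵀ * M * Q)⁻¹ * Qᵀ).mulVec Y ∧
    ((Tᵀ * M⁻¹ * T)⁻¹ * Tᵀ * M⁻¹).mulVec Y
      = ((Tᵀ * T)⁻¹ * Tᵀ).mulVec (Y - M.mulVec β) := by
  -- M is positive definite
  have hMpd : M.PosDef := by
    have hsm : (lam • D⁻¹).PosDef := by
      refine posDef_iff_dotProduct_mulVec.mpr ⟨?_, fun x hx => ?_⟩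
      · simpa [Matrix.IsHermitian, conjTranspose_smul] using congrArg (lam • ·) hD.inv.1.eq
      · have := hD.inv.dotProduct_mulVec_pos hx
        simp only [smul_mulVec, dotProduct_smul, smul_eq_mul]
        exact mul_pos hlam this
    rw [hM]; exact Matrix.PosDef.posSemidef_add hK hsm
  have hTin : Function.Injective T.mulVec := mulVec_inj_of_rank T hT
  have hQin : Function.Injective Q.mulVec := mulVec_inj_of_rank Q hQ
  have hTQ : Tᵀ * Q = 0 := by
    have := congrArg Matrix.transpose hQT
    simpa using this
  -- invertibility facts
  have hMMi : M * M⁻¹ = 1 := Matrix.mul_nonsing_inv M hMpd.det_pos.ne'.isUnit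
  have hMiM : M⁻¹ * M = 1 := Matrix.nonsing_inv_mul M hMpd.det_pos.ne'.isUnit
  have hGpd : (Tᵀ * M⁻¹ * T).PosDef := conj_posDef hMpd.inv T hTin
  have hGu : IsUnit (Tᵀ * M⁻¹ * T).det := hGpd.det_pos.ne'.isUnit
  have hGGi : (Tᵀ * M⁻¹ * T) * (Tᵀ * M⁻¹ * T)⁻¹ = 1 := Matrix.mul_nonsing_inv _ hGu
  have hGiG : (Tᵀ * M⁻¹ * T)⁻¹ * (Tᵀ * M⁻¹ * T) = 1 := Matrix.nonsing_inv_mul _ hGu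
  have hHpd : (Qᵀ * M * Q).PosDef := conj_posDef hMpd Q hQin
  have hHu : IsUnit (Qᵀ * M * Q).det := hHpd.det_pos.ne'.isUnit
  have hHiH : (Qᵀ * M * Q)⁻¹ * (Qᵀ * M * Q) = 1 := Matrix.nonsing_inv_mul _ hHu
  have hTTpd : (Tᵀ * T).PosDef := by
    have := conj_posDef Matrix.PosDef.one T hTin
    simpa using this
  have hTTiTT : (Tᵀ * T)⁻¹ * (Tᵀ * T) = 1 :=
    Matrix.nonsing_inv_mul _ hTTpd.det_pos.ne'.isUnit
  set G := (Tᵀ * M⁻¹ * T)⁻¹ with hGdef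
  set P := M⁻¹ * (1 - T * G * Tᵀ * M⁻¹) with hPdef
  set R := Q * (Qᵀ * M * Q)⁻¹ * Qᵀ with hRdef
  -- matrix identities
  have hTP : Tᵀ * P = 0 := by
    have e : Tᵀ * P = Tᵀ * M⁻¹ - Tᵀ * M⁻¹ * T * G * (Tᵀ * M⁻¹) := by
      rw [hPdef]; simp [Matrix.mul_sub, Matrix.sub_mul, Matrix.mul_one, Matrix.mul_assoc]
    rw [e, hGGi, Matrix.one_mul, sub_self]
  have hPT : P * T = 0 := by
    have e : P * T = M⁻¹ * T - M⁻¹ * T * (G * (Tᵀ * M⁻¹ * T)) := by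
      rw [hPdef]; simp [Matrix.mul_sub, Matrix.sub_mul, Matrix.mul_one, Matrix.mul_assoc]
    rw [e, hGiG, Matrix.mul_one, sub_self]
  have hPMQ : P * (M * Q) = Q := by
    have e : P * (M * Q) = M⁻¹ * M * Q - M⁻¹ * T * G * (Tᵀ * (M⁻¹ * M * Q)) := by
      rw [hPdef]; simp [Matrix.mul_sub, Matrix.sub_mul, Matrix.mul_one, Matrix.mul_assoc]
    rw [e, hMiM]
    simp [hTQ, Matrix.mul_assoc]
  have hRT : R * T = 0 := by
    have e : R * T = Q * (Qᵀ * M * Q)⁻¹ * (Qᵀ * T) := by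
      rw [hRdef]; simp [Matrix.mul_assoc]
    rw [e, hQT, Matrix.mul_zero]
  have hRMQ : R * (M * Q) = Q := by
    have e : R * (M * Q) = Q * ((Qᵀ * M * Q)⁻¹ * (Qᵀ * M * Q)) := by
      rw [hRdef]; simp [Matrix.mul_assoc]
    rw [e, hHiH, Matrix.mul_one]
  -- decomposition of Y
  obtain ⟨⟨a, b⟩, hab⟩ : ∃ p : (Fin m → ℝ) × (Fin (n - m) → ℝ),
      T.mulVec p.1 + (M * Q).mulVec p.2 = Y := by
    let f : ((Fin m → ℝ) × (Fin (n - m) → ℝ)) →ₗ[ℝ] (Fin n → ℝ) :=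
      T.mulVecLin.coprod (M * Q).mulVecLin
    have hfinj : Function.Injective f := by
      rw [← LinearMap.ker_eq_bot, Submodule.eq_bot_iff]
      rintro ⟨a, b⟩ hp
      have hp' : T.mulVec a + (M * Q).mulVec b = 0 := hp
      have hb : (Qᵀ * M * Q).mulVec b = 0 := by
        have := congrArg Qᵀ.mulVec hp'
        simpa [Matrix.mulVec_add, Matrix.mulVec_mulVec, hQT, Matrix.mul_assoc] using this
      have hb0 : b = 0 := by
        have hinj : Function.Injective (Qᵀ * M * Q).mulVec :=
          Matrix.mulVec_injective_iff_isUnit.mpr (Matrix.isUnit_iff_isUnit_det _ |>.mpr hHu)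
        exact hinj (hb.trans (Matrix.mulVec_zero _).symm)
      have ha0 : a = 0 := by
        have : T.mulVec a = 0 := by simpa [hb0] using hp'
        exact hTin (this.trans (Matrix.mulVec_zero T).symm)
      simp [ha0, hb0, Prod.ext_iff]
    have hsurj : Function.Surjective f := by
      have hdim : Module.finrank ℝ ((Fin m → ℝ) × (Fin (n - m) → ℝ))
          = Module.finrank ℝ (Fin n → ℝ) := by
        simp [Module.finrank_prod, Module.finrank_fin_fun]
        omega
      exact (LinearMap.injective_iff_surjective_of_finrank_eq_finrank hdim).mp hfinj
    obtain ⟨p, hp⟩ := hsurj Y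
    exact ⟨p, hp⟩
  -- part 1
  have part1 : Tᵀ.mulVec β = 0 := by
    rw [hβ, Matrix.mulVec_mulVec, hTP, Matrix.zero_mulVec]
  refine ⟨part1, ?_, ?_⟩
  -- part 2
  · rw [hβ, ← hab]
    simp [Matrix.mulVec_add, Matrix.mulVec_mulVec, hPT, hPMQ, hRT, hRMQ]
  -- part 3
  · have hMβ : M.mulVec β = Y - (T * G * Tᵀ * M⁻¹).mulVec Y := by
      rw [hβ, Matrix.mulVec_mulVec]
      have : M * P = 1 - T * G * Tᵀ * M⁻¹ := by
        rw [hPdef, ← Matrix.mul_assoc, hMMi, Matrix.one_mul]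
      rw [this, Matrix.sub_mulVec, Matrix.one_mulVec]
    rw [hMβ, sub_sub_cancel, Matrix.mulVec_mulVec]
    have h2 : (Tᵀ * T)⁻¹ * Tᵀ * (T * G * Tᵀ * M⁻¹)
        = (Tᵀ * T)⁻¹ * (Tᵀ * T) * (G * Tᵀ * M⁻¹) := by
      simp [Matrix.mul_assoc]
    rw [h2, hTTiTT, Matrix.one_mul]
end
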